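/- Pauli coefficient recovery: let T(X) = ∑_{c,d} ξ_{c,d} P_c X P_d be a Hermiticity-preserving linear map on N-qubit operators, where P_c, P_d run over phaseless N-qubit Pauli strings. Define O_{a,b} = 2^{−N} Tr(P_a T(P_b)). Then the coefficients are recovered linearly via ξ_{c,d} = ∑_{a,b} G^{−1}_{(c,d),(a,b)} O_{a,b} with G^{−1}_{(c,d),(a,b)} = 2^{−3N} Tr(P_c P_a P_d P_b); moreover, for fixed (e,f), for each P_a there is exactly one phaseless Pauli P_b with G^{−1}_{(e,f),(a,b)} ≠ 0 (the one proportional to (P_e P_a P_f)†), each nonzero entry has modulus 4^{−N}, and consequently if each O_{a,b} is estimated to additive precision ε then each ξ_{e,f} is recovered to additive precision ε. -/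

import Mathlib

open Matrix
open GaussianInt

/-- The four single-qubit Pauli matrices `I, σˣ, σʸ, σᶻ`. -/
noncomputable def pauliMat : Fin 4 → Matrix (Fin 2) (Fin 2) ℂ
  | 0 => 1
  | 1 => !![0, 1; 1, 0]
  | 2 => !![0, -Complex.I; Complex.I, 0]
  | 3 => !![1, 0; 0, -1]

/-- A phaseless `N`-qubit Pauli string, as a tensor (Kronecker) product of Pauli matrices. -/
noncomputable def pauliString (N : ℕ) (p : Fin N → Fin 4) :
    Matrix (Fin N → Fin 2) (Fin N → Fin 2) ℂ :=
  fun x y => ∏ i, pauliMat (p i) (x i) (y i)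

def pmul : Fin 4 → Fin 4 → Fin 4
  | 0, j => j
  | 1, 0 => 1 | 1, 1 => 0 | 1, 2 => 3 | 1, 3 => 2
  | 2, 0 => 2 | 2, 1 => 3 | 2, 2 => 0 | 2, 3 => 1
  | 3, 0 => 3 | 3, 1 => 2 | 3, 2 => 1 | 3, 3 => 0
def pz : Fin 4 → Fin 4 → GaussianInt
  | 1, 2 => ⟨0, 1⟩ | 2, 3 => ⟨0, 1⟩ | 3, 1 => ⟨0, 1⟩
  | 2, 1 => ⟨0, -1⟩ | 3, 2 => ⟨0, -1⟩ | 1, 3 => ⟨0, -1⟩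
  | _, _ => 1
noncomputable def pω (i j : Fin 4) : ℂ := toComplex (pz i j)
def tau (u v s t : Fin 4) : GaussianInt :=
  pz u v * pz s t * pz (pmul u v) (pmul s t) *
    (if pmul (pmul u v) (pmul s t) = 0 then 2 else 0)

lemma pm_mul (i j : Fin 4) :
    pauliMat i * pauliMat j = pω i j • pauliMat (pmul i j) := by
  fin_cases i <;> fin_cases j <;>
    · ext a b
      fin_cases a <;> fin_cases b <;>
        simp [pauliMat, pω, pz, pmul, Matrix.mul_apply, Fin.sum_univ_two, toComplex_def]

lemma pm_trace (k : Fin 4) : (∑ t : Fin 2, pauliMat k t t) = if k = 0 then 2 else 0 := by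
  fin_cases k <;> simp [pauliMat, Fin.sum_univ_two]

lemma ps_mul (N : ℕ) (a b : Fin N → Fin 4) :
    pauliString N a * pauliString N b =
      (∏ i, pω (a i) (b i)) • pauliString N (fun i => pmul (a i) (b i)) := by
  ext x y
  simp only [Matrix.mul_apply, pauliString, Matrix.smul_apply, smul_eq_mul]
  calc ∑ z : Fin N → Fin 2, (∏ i, pauliMat (a i) (x i) (z i)) * ∏ i, pauliMat (b i) (z i) (y i)
      = ∑ z : Fin N → Fin 2, ∏ i, (pauliMat (a i) (x i) (z i) * pauliMat (b i) (z i) (y i)) := by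
        simp [Finset.prod_mul_distrib]
    _ = ∏ i, ∑ t : Fin 2, pauliMat (a i) (x i) t * pauliMat (b i) t (y i) := by
        rw [Finset.prod_univ_sum]
        simp [Fintype.piFinset_univ]
    _ = ∏ i, (pauliMat (a i) * pauliMat (b i)) (x i) (y i) := by
        simp [Matrix.mul_apply]
    _ = _ := by
        simp only [pm_mul, Matrix.smul_apply, smul_eq_mul]
        rw [Finset.prod_mul_distrib]

lemma ps_trace (N : ℕ) (p : Fin N → Fin 4) :
    Matrix.trace (pauliString N p) = ∏ i, (if p i = 0 then (2:ℂ) else 0) := by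
  simp only [Matrix.trace, Matrix.diag, pauliString]
  simp only [← pm_trace]
  rw [Finset.prod_univ_sum]
  simp [Fintype.piFinset_univ]

/-- master trace formula for a fourfold product -/
lemma ps_trace4 (N : ℕ) (w x y z : Fin N → Fin 4) :
    Matrix.trace (pauliString N w * pauliString N x * pauliString N y * pauliString N z) =
      ∏ i, (toComplex (tau (w i) (x i) (y i) (z i))) := by
  rw [mul_assoc (pauliString N w * pauliString N x) (pauliString N y) (pauliString N z),
    ps_mul N w x, ps_mul N y z, Matrix.smul_mul, Matrix.mul_smul, ps_mul,
    trace_smul, trace_smul, trace_smul, ps_trace]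
  simp only [smul_eq_mul, tau, _root_.map_mul]
  rw [← Finset.prod_mul_distrib, ← Finset.prod_mul_distrib, ← Finset.prod_mul_distrib]
  congr 1; ext i
  have h2 : toComplex (2 : GaussianInt) = 2 := by simp [toComplex_def]
  rcases eq_or_ne (pmul (pmul (w i) (x i)) (pmul (y i) (z i))) 0 with h | h
  · simp only [h, if_true, eq_self_iff_true]; simp only [pω, h2]; ring
  · simp [h, pω]

lemma tau_sum_eq : ∀ u v u' v' : Fin 4,
    (∑ k : Fin 4, ∑ l : Fin 4, tau u k v l * tau k u' l v') =
      if u = u' ∧ v = v' then 16 else 0 := by decide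

lemma tau_ne_zero_iff : ∀ u v s t : Fin 4, tau u v s t ≠ 0 ↔ t = pmul (pmul u v) s := by decide

lemma tau_norm_eq : ∀ u v s : Fin 4, (tau u v s (pmul (pmul u v) s)).norm = 4 := by decide

lemma prod_ite_eq_ite {ι : Type*} [Fintype ι] (p : ι → Prop) [DecidablePred p] (x : ℂ) :
    (∏ i, if p i then x else 0) = if ∀ i, p i then x ^ (Fintype.card ι) else 0 := by
  by_cases h : ∀ i, p i
  · rw [if_pos h, Finset.prod_congr rfl (fun i _ => if_pos (h i))]
    simp [Finset.card_univ]
  · push_neg at h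
    obtain ⟨i, hi⟩ := h
    rw [if_neg (by push_neg; exact ⟨i, hi⟩)]
    exact Finset.prod_eq_zero (Finset.mem_univ i) (if_neg hi)

lemma key_sum (N : ℕ) (c d c' d' : Fin N → Fin 4) :
    (∑ a : Fin N → Fin 4, ∑ b : Fin N → Fin 4,
      Matrix.trace (pauliString N c * pauliString N a * pauliString N d * pauliString N b) *
      Matrix.trace (pauliString N a * pauliString N c' * pauliString N b * pauliString N d')) =
      if c = c' ∧ d = d' then (2:ℂ) ^ (4 * N) else 0 := by
  have step1 : ∀ a : Fin N → Fin 4,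
      (∑ b : Fin N → Fin 4,
        ∏ i, (toComplex (tau (c i) (a i) (d i) (b i)) * toComplex (tau (a i) (c' i) (b i) (d' i)))) =
      ∏ i, ∑ l : Fin 4, toComplex (tau (c i) (a i) (d i) l) * toComplex (tau (a i) (c' i) l (d' i)) := by
    intro a
    rw [Finset.prod_univ_sum]
    simp [Fintype.piFinset_univ]
  calc (∑ a : Fin N → Fin 4, ∑ b : Fin N → Fin 4,
      Matrix.trace (pauliString N c * pauliString N a * pauliString N d * pauliString N b) *
      Matrix.trace (pauliString N a * pauliString N c' * pauliString N b * pauliString N d'))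
      = ∑ a : Fin N → Fin 4, ∑ b : Fin N → Fin 4,
          ∏ i, (toComplex (tau (c i) (a i) (d i) (b i)) * toComplex (tau (a i) (c' i) (b i) (d' i))) := by
        refine Finset.sum_congr rfl fun a _ => Finset.sum_congr rfl fun b _ => ?_
        rw [ps_trace4, ps_trace4, Finset.prod_mul_distrib]
    _ = ∑ a : Fin N → Fin 4,
          ∏ i, ∑ l : Fin 4, toComplex (tau (c i) (a i) (d i) l) * toComplex (tau (a i) (c' i) l (d' i)) :=
        Finset.sum_congr rfl fun a _ => step1 a
    _ = ∏ i, ∑ k : Fin 4, ∑ l : Fin 4,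
          toComplex (tau (c i) k (d i) l) * toComplex (tau k (c' i) l (d' i)) := by
        rw [Finset.prod_univ_sum]
        simp [Fintype.piFinset_univ]
    _ = ∏ i, (if c i = c' i ∧ d i = d' i then (16:ℂ) else 0) := by
        refine Finset.prod_congr rfl fun i _ => ?_
        have := tau_sum_eq (c i) (d i) (c' i) (d' i)
        have h2 : (∑ k : Fin 4, ∑ l : Fin 4,
            toComplex (tau (c i) k (d i) l) * toComplex (tau k (c' i) l (d' i))) =
            toComplex (∑ k : Fin 4, ∑ l : Fin 4, tau (c i) k (d i) l * tau k (c' i) l (d' i)) := by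
          simp [_root_.map_sum, _root_.map_mul]
        rw [h2, this]
        split <;> simp [toComplex_def]
    _ = if c = c' ∧ d = d' then (2:ℂ) ^ (4 * N) else 0 := by
        rw [prod_ite_eq_ite]
        have hc : (∀ i, c i = c' i ∧ d i = d' i) ↔ (c = c' ∧ d = d') := by
          simp [funext_iff, forall_and]
        have hcard : Fintype.card (Fin N) = N := Fintype.card_fin N
        rw [hcard]
        by_cases h : c = c' ∧ d = d'
        · rw [if_pos (hc.mpr h), if_pos h, pow_mul]
          norm_num
        · rw [if_neg (fun hh => h (hc.mp hh)), if_neg h]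

lemma trace4_ne_zero_iff (N : ℕ) (e a f b : Fin N → Fin 4) :
    Matrix.trace (pauliString N e * pauliString N a * pauliString N f * pauliString N b) ≠ 0 ↔
      b = fun i => pmul (pmul (e i) (a i)) (f i) := by
  rw [ps_trace4, Finset.prod_ne_zero_iff, funext_iff]
  constructor
  · intro h i
    have := h i (Finset.mem_univ i)
    rw [Ne, toComplex_eq_zero] at this
    exact (tau_ne_zero_iff _ _ _ _).mp this
  · intro h i _
    rw [Ne, toComplex_eq_zero]
    exact (tau_ne_zero_iff _ _ _ _).mpr (h i)

lemma abs_tau (u v s : Fin 4) :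
    ‖toComplex (tau u v s (pmul (pmul u v) s))‖ = 2 := by
  rw [Complex.norm_def, ← intCast_real_norm, tau_norm_eq]
  rw [show ((4:ℤ):ℝ) = 2^2 by norm_num, Real.sqrt_sq (by norm_num)]

lemma abs_trace4 (N : ℕ) (e a f : Fin N → Fin 4) :
    ‖Matrix.trace (pauliString N e * pauliString N a * pauliString N f *
      pauliString N (fun i => pmul (pmul (e i) (a i)) (f i)))‖ = 2 ^ N := by
  rw [ps_trace4, norm_prod]
  simp [abs_tau]

lemma sum4_comm {α : Type*} [Fintype α] (f : α → α → α → α → ℂ) :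
    ∑ a, ∑ b, ∑ c, ∑ d, f a b c d = ∑ c, ∑ d, ∑ a, ∑ b, f a b c d :=
  calc ∑ a, ∑ b, ∑ c, ∑ d, f a b c d
      = ∑ a, ∑ c, ∑ b, ∑ d, f a b c d :=
        Finset.sum_congr rfl fun a _ => Finset.sum_comm
    _ = ∑ c, ∑ a, ∑ b, ∑ d, f a b c d := Finset.sum_comm
    _ = ∑ c, ∑ a, ∑ d, ∑ b, f a b c d :=
        Finset.sum_congr rfl fun c _ => Finset.sum_congr rfl fun a _ => Finset.sum_comm
    _ = ∑ c, ∑ d, ∑ a, ∑ b, f a b c d :=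
        Finset.sum_congr rfl fun c _ => Finset.sum_comm


/-- Pauli coefficient recovery for a Hermiticity-preserving map
`T(X) = ∑_{c,d} ξ_{c,d} P_c X P_d` from the observables `O_{a,b} = 2^{−N} Tr(P_a T(P_b))`:
`ξ_{c,d} = ∑_{a,b} G⁻¹_{(c,d),(a,b)} O_{a,b}` with
`G⁻¹_{(c,d),(a,b)} = 2^{−3N} Tr(P_c P_a P_d P_b)`; for fixed `(e,f)` and each `a` exactly
one `b` gives a nonzero entry, each nonzero entry has modulus `4^{−N}`, and estimating each
`O_{a,b}` to additive precision `ε` recovers each `ξ_{e,f}` to additive precision `ε`. -/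
theorem pauli_coefficient_recovery (N : ℕ)
    (ξ : (Fin N → Fin 4) → (Fin N → Fin 4) → ℂ)
    (hherm : ∀ c d, (starRingEnd ℂ) (ξ c d) = ξ d c)
    (O : (Fin N → Fin 4) → (Fin N → Fin 4) → ℂ)
    (hO : ∀ a b, O a b = (2 : ℂ) ^ (-(N : ℤ)) *
      Matrix.trace (pauliString N a *
        ∑ c, ∑ d, ξ c d • (pauliString N c * pauliString N b * pauliString N d))) :
    (∀ c d, ξ c d = ∑ a, ∑ b,
        ((2 : ℂ) ^ (-(3 * N : ℤ)) *
          Matrix.trace (pauliString N c * pauliString N a * pauliString N d * pauliString N b))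
          * O a b)
    ∧ (∀ e f a, ∃! b,
        Matrix.trace (pauliString N e * pauliString N a * pauliString N f * pauliString N b)
          ≠ 0)
    ∧ (∀ e f a b,
        Matrix.trace (pauliString N e * pauliString N a * pauliString N f * pauliString N b)
          ≠ 0 →
        norm ((2 : ℂ) ^ (-(3 * N : ℤ)) *
          Matrix.trace (pauliString N e * pauliString N a * pauliString N f * pauliString N b))
          = (4 : ℝ) ^ (-(N : ℤ)))
    ∧ (∀ (ε : ℝ) (Ohat : (Fin N → Fin 4) → (Fin N → Fin 4) → ℂ),
        0 ≤ ε →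
        (∀ a b, norm (Ohat a b - O a b) ≤ ε) →
        ∀ e f, norm ((∑ a, ∑ b,
          ((2 : ℂ) ^ (-(3 * N : ℤ)) *
            Matrix.trace
              (pauliString N e * pauliString N a * pauliString N f * pauliString N b))
            * Ohat a b) - ξ e f) ≤ ε) := by
  have h2 : (2:ℂ) ≠ 0 := two_ne_zero
  -- expanded form of the observables
  have hOexp : ∀ a b, O a b = (2 : ℂ) ^ (-(N : ℤ)) * ∑ c', ∑ d', ξ c' d' *
      Matrix.trace (pauliString N a * pauliString N c' * pauliString N b * pauliString N d') := by
    intro a b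
    rw [hO a b]
    congr 1
    rw [Matrix.mul_sum, trace_sum]
    refine Finset.sum_congr rfl fun c' _ => ?_
    rw [Matrix.mul_sum, trace_sum]
    refine Finset.sum_congr rfl fun d' _ => ?_
    rw [Matrix.mul_smul, trace_smul, smul_eq_mul]
    congr 1
    simp only [← mul_assoc]
  -- Part 1
  have h1 : ∀ c d, ξ c d = ∑ a, ∑ b,
      ((2 : ℂ) ^ (-(3 * N : ℤ)) *
        Matrix.trace (pauliString N c * pauliString N a * pauliString N d * pauliString N b))
        * O a b := by
    intro c d
    symm
    calc ∑ a, ∑ b, ((2 : ℂ) ^ (-(3 * N : ℤ)) *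
          Matrix.trace (pauliString N c * pauliString N a * pauliString N d * pauliString N b))
          * O a b
        = ∑ a, ∑ b, ∑ c', ∑ d',
            ((2 : ℂ) ^ (-(3 * N : ℤ)) * (2 : ℂ) ^ (-(N : ℤ)) * ξ c' d') *
            (Matrix.trace (pauliString N c * pauliString N a * pauliString N d * pauliString N b) *
             Matrix.trace (pauliString N a * pauliString N c' * pauliString N b * pauliString N d')) := by
          refine Finset.sum_congr rfl fun a _ => Finset.sum_congr rfl fun b _ => ?_
          rw [hOexp a b]
          simp only [Finset.mul_sum]
          refine Finset.sum_congr rfl fun c' _ => Finset.sum_congr rfl fun d' _ => ?_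
          ring
      _ = ∑ c', ∑ d', ∑ a, ∑ b,
            ((2 : ℂ) ^ (-(3 * N : ℤ)) * (2 : ℂ) ^ (-(N : ℤ)) * ξ c' d') *
            (Matrix.trace (pauliString N c * pauliString N a * pauliString N d * pauliString N b) *
             Matrix.trace (pauliString N a * pauliString N c' * pauliString N b * pauliString N d')) :=
          sum4_comm _
      _ = ∑ c', ∑ d',
            ((2 : ℂ) ^ (-(3 * N : ℤ)) * (2 : ℂ) ^ (-(N : ℤ)) * ξ c' d') *
            (if c = c' ∧ d = d' then (2:ℂ) ^ (4 * N) else 0) := by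
          refine Finset.sum_congr rfl fun c' _ => Finset.sum_congr rfl fun d' _ => ?_
          rw [← key_sum N c d c' d']
          simp only [← Finset.mul_sum]
      _ = ((2 : ℂ) ^ (-(3 * N : ℤ)) * (2 : ℂ) ^ (-(N : ℤ)) * ξ c d) * (2:ℂ) ^ (4 * N) := by
          simp [mul_ite, mul_zero, ite_and, Finset.sum_ite_eq]
      _ = ξ c d := by
          have hpow : (2 : ℂ) ^ (-(3 * N : ℤ)) * (2 : ℂ) ^ (-(N : ℤ)) * (2:ℂ) ^ (4 * N) = 1 := by
            rw [← zpow_natCast (2:ℂ) (4 * N), ← zpow_add₀ h2, ← zpow_add₀ h2,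
              show (-(3 * N : ℤ) + -(N : ℤ) + ((4 * N : ℕ) : ℤ)) = 0 by push_cast; ring,
              zpow_zero]
          calc ((2 : ℂ) ^ (-(3 * N : ℤ)) * (2 : ℂ) ^ (-(N : ℤ)) * ξ c d) * (2:ℂ) ^ (4 * N)
              = ((2 : ℂ) ^ (-(3 * N : ℤ)) * (2 : ℂ) ^ (-(N : ℤ)) * (2:ℂ) ^ (4 * N)) * ξ c d := by
                ring
            _ = ξ c d := by rw [hpow, one_mul]
  -- Part 3 (needed also for part 4)
  have h3 : ∀ e f a b,
      Matrix.trace (pauliString N e * pauliString N a * pauliString N f * pauliString N b) ≠ 0 →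
      norm ((2 : ℂ) ^ (-(3 * N : ℤ)) *
        Matrix.trace (pauliString N e * pauliString N a * pauliString N f * pauliString N b))
        = (4 : ℝ) ^ (-(N : ℤ)) := by
    intro e f a b hb
    have hb' := (trace4_ne_zero_iff N e a f b).mp hb
    subst hb'
    rw [norm_mul, abs_trace4, norm_zpow, Complex.norm_two]
    have h4 : (4:ℝ) ^ (-(N:ℤ)) = (2:ℝ) ^ ((2:ℤ) * (-(N:ℤ))) := by
      rw [_root_.zpow_mul]
      norm_num
    rw [h4, ← zpow_natCast (2:ℝ) N, ← zpow_add₀ (by norm_num : (2:ℝ) ≠ 0)]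
    congr 1
    push_cast
    ring
  refine ⟨h1, ?_, h3, ?_⟩
  -- Part 2
  · intro e f a
    refine ⟨fun i => pmul (pmul (e i) (a i)) (f i), ?_, ?_⟩
    · exact (trace4_ne_zero_iff N e a f _).mpr rfl
    · intro b hb
      exact (trace4_ne_zero_iff N e a f b).mp hb
  -- Part 4
  · intro ε Ohat hε hOhat e f
    have habsG : ∀ a b, norm ((2 : ℂ) ^ (-(3 * N : ℤ)) *
        Matrix.trace (pauliString N e * pauliString N a * pauliString N f * pauliString N b)) =
        if b = (fun i => pmul (pmul (e i) (a i)) (f i)) then (4:ℝ) ^ (-(N:ℤ)) else 0 := by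
      intro a b
      by_cases hb : b = fun i => pmul (pmul (e i) (a i)) (f i)
      · rw [if_pos hb]
        exact h3 e f a b ((trace4_ne_zero_iff N e a f b).mpr hb)
      · rw [if_neg hb]
        have hz : Matrix.trace (pauliString N e * pauliString N a * pauliString N f *
            pauliString N b) = 0 := by
          by_contra hne
          exact hb ((trace4_ne_zero_iff N e a f b).mp hne)
        simp [hz]
    calc norm ((∑ a, ∑ b,
          ((2 : ℂ) ^ (-(3 * N : ℤ)) *
            Matrix.trace
              (pauliString N e * pauliString N a * pauliString N f * pauliString N b))
            * Ohat a b) - ξ e f)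
        = norm (∑ a, ∑ b,
            ((2 : ℂ) ^ (-(3 * N : ℤ)) *
              Matrix.trace
                (pauliString N e * pauliString N a * pauliString N f * pauliString N b))
              * (Ohat a b - O a b)) := by
          rw [h1 e f, ← Finset.sum_sub_distrib]
          congr 1
          refine Finset.sum_congr rfl fun a _ => ?_
          rw [← Finset.sum_sub_distrib]
          refine Finset.sum_congr rfl fun b _ => ?_
          ring
      _ ≤ ∑ a, norm (∑ b,
            ((2 : ℂ) ^ (-(3 * N : ℤ)) *
              Matrix.trace
                (pauliString N e * pauliString N a * pauliString N f * pauliString N b))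
              * (Ohat a b - O a b)) := norm_sum_le _ _
      _ ≤ ∑ a, ∑ b, norm (
            ((2 : ℂ) ^ (-(3 * N : ℤ)) *
              Matrix.trace
                (pauliString N e * pauliString N a * pauliString N f * pauliString N b))
              * (Ohat a b - O a b)) :=
          Finset.sum_le_sum fun a _ => norm_sum_le _ _
      _ ≤ ∑ a, ∑ b, norm
            ((2 : ℂ) ^ (-(3 * N : ℤ)) *
              Matrix.trace
                (pauliString N e * pauliString N a * pauliString N f * pauliString N b))
              * ε := by
          refine Finset.sum_le_sum fun a _ => Finset.sum_le_sum fun b _ => ?_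
          rw [norm_mul]
          exact mul_le_mul_of_nonneg_left (hOhat a b) (norm_nonneg _)
      _ = ε := by
          simp only [habsG, ite_mul, zero_mul, Finset.sum_ite_eq', Finset.mem_univ, if_true]
          rw [Finset.sum_const, Finset.card_univ]
          have hcard : Fintype.card (Fin N → Fin 4) = 4 ^ N := by
            simp [Fintype.card_fun]
          rw [hcard, nsmul_eq_mul]
          push_cast
          rw [← zpow_natCast (4:ℝ) N, ← mul_assoc, ← zpow_add₀ (by norm_num : (4:ℝ) ≠ 0)]
          norm_num
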